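/- Let (G,<) be a finite ordered connected graph with <-least vertex v₀, and define ≺ by the <*-least shortest path from v₀ as above. Then for every vertex v ≠ v₀, the ≺-least neighbor of v is the second-to-last vertex of the <*-least shortest path from v₀ to v. -/

import Mathlib

/-- The order `<*` on finite vertex sequences: first by length, then
lexicographically with respect to the linear order on vertices. -/
def travOrd {V : Type*} [LinearOrder V] (a b : List V) : Prop :=
  a.length < b.length ∨ (a.length = b.length ∧ List.Lex (· < ·) a b)

lemma travOrd_irrefl {V : Type*} [LinearOrder V] (a : List V) : ¬ travOrd a a := by
  rintro (h | ⟨-, h⟩)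
  · exact lt_irrefl _ h
  · exact irrefl_of (List.Lex (· < ·)) a h

lemma travOrd_trans {V : Type*} [LinearOrder V] {a b c : List V}
    (h1 : travOrd a b) (h2 : travOrd b c) : travOrd a c := by
  rcases h1 with h1 | ⟨e1, l1⟩ <;> rcases h2 with h2 | ⟨e2, l2⟩
  · exact Or.inl (h1.trans h2)
  · exact Or.inl (e2 ▸ h1)
  · exact Or.inl (e1 ▸ h2)
  · exact Or.inr ⟨e1.trans e2, List.lex_trans (fun h h' => lt_trans h h') l1 l2⟩

lemma travOrd_len_le {V : Type*} [LinearOrder V] {a b : List V}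
    (h : travOrd a b) : a.length ≤ b.length := by
  rcases h with h | ⟨e, -⟩
  · exact h.le
  · exact e.le

lemma travOrd_asymm {V : Type*} [LinearOrder V] {a b : List V}
    (h1 : travOrd a b) (h2 : travOrd b a) : False :=
  travOrd_irrefl a (travOrd_trans h1 h2)

lemma lex_append_right {V : Type*} [LinearOrder V] (v : V) :
    ∀ {a b : List V}, a.length = b.length → List.Lex (· < ·) a b →
      List.Lex (· < ·) (a ++ [v]) (b ++ [v])
  | [], _ :: _, hlen, _ => by simp at hlen
  | _, _, hlen, List.Lex.rel h => List.Lex.rel h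
  | _ :: a, _ :: b, hlen, List.Lex.cons h =>
      List.Lex.cons (lex_append_right v (by simpa using hlen) h)

lemma travOrd_append {V : Type*} [LinearOrder V] {a b : List V} (v : V)
    (h : travOrd a b) : travOrd (a ++ [v]) (b ++ [v]) := by
  rcases h with h | ⟨e, l⟩
  · exact Or.inl (by simpa using h)
  · exact Or.inr ⟨by simpa using e, lex_append_right v e l⟩

lemma travOrd_total {V : Type*} [LinearOrder V] (a b : List V) :
    a = b ∨ travOrd a b ∨ travOrd b a := by
  rcases lt_trichotomy a.length b.length with h | h | h
  · exact Or.inr (Or.inl (Or.inl h))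
  · rcases @trichotomous _ (List.Lex (· < ·)) _ a b with hl | rfl | hl
    · exact Or.inr (Or.inl (Or.inr ⟨h, hl⟩))
    · exact Or.inl rfl
    · exact Or.inr (Or.inr (Or.inr ⟨h.symm, hl⟩))
  · exact Or.inr (Or.inr (Or.inl h))

/-- Let `(G,<)` be a finite ordered connected graph with least vertex `v₀`, and
`vec v` the `<*`-least shortest path from `v₀` to `v`; let `v ≺ w` iff
`vec v <* vec w`. Then for every `v ≠ v₀`, the `≺`-least neighbor of `v` is the
second-to-last vertex of `vec v`. -/
theorem bft_least_neighbor_is_penultimate {V : Type*} [Fintype V] [LinearOrder V]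
    (G : SimpleGraph V) (hc : G.Connected) (v0 : V) (hv0 : ∀ u : V, v0 ≤ u)
    (vec : ∀ v : V, G.Walk v0 v)
    (hpath : ∀ v : V, (vec v).IsPath)
    (hleast : ∀ (v : V) (q : G.Walk v0 v), q.IsPath →
      (vec v).support = q.support ∨ travOrd (vec v).support q.support)
    (v : V) (hv : v ≠ v0) :
    ∃ u : V, G.Adj u v ∧
      (∀ x : V, G.Adj x v → u = x ∨ travOrd (vec u).support (vec x).support) ∧
      (vec v).support.dropLast.getLast? = some u := by
  -- decompose `vec v` as `w.concat huv`
  have hnn : ¬ (vec v).reverse.Nil := by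
    intro h
    rw [SimpleGraph.Walk.nil_iff_length_eq] at h
    exact hv (SimpleGraph.Walk.eq_of_length_eq_zero h)
  obtain ⟨u, h', q, hq⟩ := SimpleGraph.Walk.not_nil_iff.mp hnn
  have hdec : vec v = q.reverse.concat h'.symm := by
    have := congrArg SimpleGraph.Walk.reverse hq
    rwa [SimpleGraph.Walk.reverse_reverse, SimpleGraph.Walk.reverse_cons] at this
  set w : G.Walk v0 u := q.reverse with hw
  have huv : G.Adj u v := h'.symm
  have hsup : (vec v).support = w.support ++ [v] := by
    rw [hdec, SimpleGraph.Walk.support_concat]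
  have hndp : ((vec v).support).Nodup := (hpath v).support_nodup
  rw [hsup] at hndp
  have hwnodup : w.support.Nodup := (List.nodup_append.mp hndp).1
  have hvnotw : v ∉ w.support := by
    have := (List.nodup_append'.mp hndp).2.2
    intro hmem
    exact this hmem (List.mem_singleton_self v)
  have hwpath : w.IsPath := (SimpleGraph.Walk.isPath_def w).mpr hwnodup
  refine ⟨u, huv, ?_, ?_⟩
  · intro x hx
    rcases travOrd_total (vec u).support (vec x).support with heq | hlt | hgt
    · -- equal supports implies u = x
      left
      have h1 : (vec u).support.getLast? = some u := by
        rw [List.getLast?_eq_getLast (vec u).support_ne_nil, (vec u).getLast_support]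
      have h2 : (vec x).support.getLast? = some x := by
        rw [List.getLast?_eq_getLast (vec x).support_ne_nil, (vec x).getLast_support]
      rw [heq, h2] at h1
      exact (Option.some_injective _ h1).symm
    · exact Or.inr hlt
    · -- contradiction
      exfalso
      -- travOrd (vec x).support w.support
      have hxw : travOrd (vec x).support w.support := by
        rcases hleast u w hwpath with he | ht
        · rwa [he] at hgt
        · exact travOrd_trans hgt ht
      by_cases hvx : v ∈ (vec x).support
      · -- take the prefix of `vec x` up to `v`: a strictly shorter path to `v`
        set r := (vec x).takeUntil v hvx with hr
        have hrpath : r.IsPath := (hpath x).takeUntil hvx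
        have hrlen : r.support.length < (vec v).support.length := by
          have h1 : r.length ≤ (vec x).length := (vec x).length_takeUntil_le hvx
          have h2 : (vec x).support.length ≤ w.support.length := travOrd_len_le hxw
          have h3 : (vec v).support.length = w.support.length + 1 := by
            rw [hsup]; simp
          simp only [SimpleGraph.Walk.length_support] at *
          omega
        rcases hleast v r hrpath with he | ht
        · rw [he] at hrlen; omega
        · have := travOrd_len_le ht; omega
      · -- `vec x` extended by the edge `x v` is a path to `v`
        have hppath : ((vec x).concat hx).IsPath := by
          rw [← SimpleGraph.Walk.isPath_reverse_iff, SimpleGraph.Walk.reverse_concat]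
          exact ((hpath x).reverse).cons (by simpa using hvx)
        have hlt' : travOrd ((vec x).concat hx).support (vec v).support := by
          rw [SimpleGraph.Walk.support_concat, hsup]
          exact travOrd_append v hxw
        rcases hleast v ((vec x).concat hx) hppath with he | ht
        · rw [he] at hlt'; exact travOrd_irrefl _ hlt'
        · exact travOrd_asymm hlt' ht
  · rw [hsup,
      show (w.support ++ [v]).dropLast = w.support by
        simpa using List.dropLast_concat (l := w.support) (b := v)]
    rw [List.getLast?_eq_getLast w.support_ne_nil, w.getLast_support]
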